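/- Let ε < 0 be a real constant. Then the function u(t,x) = 2√(-10ε)·(3·tanh(x + 24εt)² − 2) satisfies the equation u_t + u² u_x + ε u_{xxxxx} = 0 for all (t,x) ∈ ℝ². -/

import Mathlib

lemma my_hasDerivAt_tanh (x : ℝ) :
    HasDerivAt Real.tanh (1 - Real.tanh x ^ 2) x := by
  have h : HasDerivAt (fun y => Real.sinh y / Real.cosh y)
      ((Real.cosh x * Real.cosh x - Real.sinh x * Real.sinh x) / Real.cosh x ^ 2) x :=
    (Real.hasDerivAt_sinh x).div (Real.hasDerivAt_cosh x) (ne_of_gt (Real.cosh_pos x))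
  have hfun : Real.tanh = fun y => Real.sinh y / Real.cosh y :=
    funext fun y => Real.tanh_eq_sinh_div_cosh y
  rw [hfun]
  convert h using 1
  have hc := Real.cosh_sq_sub_sinh_sq x
  have hcpos := (Real.cosh_pos x).ne'
  field_simp [Real.tanh_eq_sinh_div_cosh]

/-- Travelling-wave solution (with `+` sign) of `u_t + u² u_x + ε u_{xxxxx} = 0`, `ε < 0`. -/
theorem stmt_1 (ε : ℝ) (hε : ε < 0)
    (u : ℝ → ℝ → ℝ)
    (hu : ∀ t x : ℝ, u t x =
      2 * Real.sqrt (-10 * ε) * (3 * (Real.tanh (x + 24 * ε * t)) ^ 2 - 2)) :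
    ∀ t x : ℝ,
      deriv (fun s => u s x) t + (u t x) ^ 2 * deriv (fun y => u t y) x
        + ε * iteratedDeriv 5 (fun y => u t y) x = 0 := by
  intro t x
  set A := Real.sqrt (-10 * ε) with hA
  have hA2 : A ^ 2 = -10 * ε := Real.sq_sqrt (by linarith)
  set c := 24 * ε * t with hc
  set s : ℝ → ℝ := fun y => Real.tanh (y + c) with hsdef
  -- derivative of s
  have hs : ∀ y : ℝ, HasDerivAt s (1 - s y ^ 2) y := by
    intro y
    have h1 : HasDerivAt (fun y : ℝ => y + c) 1 y := (hasDerivAt_id y).add_const c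
    have := (my_hasDerivAt_tanh (y + c)).comp y h1
    exact this.congr_deriv (mul_one _)
  -- the spatial profile and its first five derivatives
  have hU1 : ∀ y : ℝ, HasDerivAt (fun y => 2 * A * (3 * s y ^ 2 - 2))
      (12 * A * (s y - s y ^ 3)) y := by
    intro y
    have h := ((((hs y).pow 2).const_mul 3).sub_const 2).const_mul (2 * A)
    refine h.congr_deriv ?_; push_cast; ring
  have hU2 : ∀ y : ℝ, HasDerivAt (fun y => 12 * A * (s y - s y ^ 3))
      (12 * A * (1 - 4 * s y ^ 2 + 3 * s y ^ 4)) y := by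
    intro y
    have h := ((hs y).sub ((hs y).pow 3)).const_mul (12 * A)
    refine h.congr_deriv ?_; push_cast; ring
  have hU3 : ∀ y : ℝ, HasDerivAt (fun y => 12 * A * (1 - 4 * s y ^ 2 + 3 * s y ^ 4))
      (12 * A * (-8 * s y + 20 * s y ^ 3 - 12 * s y ^ 5)) y := by
    intro y
    have h := ((((hasDerivAt_const y (1:ℝ)).sub (((hs y).pow 2).const_mul 4)).add
      (((hs y).pow 4).const_mul 3))).const_mul (12 * A)
    refine h.congr_deriv ?_; push_cast; ring
  have hU4 : ∀ y : ℝ, HasDerivAt (fun y => 12 * A * (-8 * s y + 20 * s y ^ 3 - 12 * s y ^ 5))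
      (12 * A * (-8 + 68 * s y ^ 2 - 120 * s y ^ 4 + 60 * s y ^ 6)) y := by
    intro y
    have h := ((((hs y).const_mul (-8)).add (((hs y).pow 3).const_mul 20)).sub
      (((hs y).pow 5).const_mul 12)).const_mul (12 * A)
    refine h.congr_deriv ?_; push_cast; ring
  have hU5 : ∀ y : ℝ, HasDerivAt
      (fun y => 12 * A * (-8 + 68 * s y ^ 2 - 120 * s y ^ 4 + 60 * s y ^ 6))
      (12 * A * (136 * s y - 616 * s y ^ 3 + 840 * s y ^ 5 - 360 * s y ^ 7)) y := by
    intro y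
    have h := (((((hasDerivAt_const y (-8:ℝ)).add (((hs y).pow 2).const_mul 68)).sub
      (((hs y).pow 4).const_mul 120)).add (((hs y).pow 6).const_mul 60))).const_mul (12 * A)
    refine h.congr_deriv ?_; push_cast; ring
  -- identify u t with the profile
  have hufun : (fun y => u t y) = fun y => 2 * A * (3 * s y ^ 2 - 2) := by
    funext y; rw [hu t y]
  -- spatial derivatives as function equalities
  have e1 : deriv (fun y => u t y) = fun y => 12 * A * (s y - s y ^ 3) := by
    rw [hufun]; exact funext fun y => (hU1 y).deriv
  have e2 : iteratedDeriv 2 (fun y => u t y)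
      = fun y => 12 * A * (1 - 4 * s y ^ 2 + 3 * s y ^ 4) := by
    rw [iteratedDeriv_succ, iteratedDeriv_one, e1]
    exact funext fun y => (hU2 y).deriv
  have e3 : iteratedDeriv 3 (fun y => u t y)
      = fun y => 12 * A * (-8 * s y + 20 * s y ^ 3 - 12 * s y ^ 5) := by
    rw [iteratedDeriv_succ, e2]
    exact funext fun y => (hU3 y).deriv
  have e4 : iteratedDeriv 4 (fun y => u t y)
      = fun y => 12 * A * (-8 + 68 * s y ^ 2 - 120 * s y ^ 4 + 60 * s y ^ 6) := by
    rw [iteratedDeriv_succ, e3]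
    exact funext fun y => (hU4 y).deriv
  have e5 : iteratedDeriv 5 (fun y => u t y)
      = fun y => 12 * A * (136 * s y - 616 * s y ^ 3 + 840 * s y ^ 5 - 360 * s y ^ 7) := by
    rw [iteratedDeriv_succ, e4]
    exact funext fun y => (hU5 y).deriv
  -- time derivative
  have htfun : (fun τ => u τ x) = fun τ => 2 * A * (3 * Real.tanh (x + 24 * ε * τ) ^ 2 - 2) := by
    funext τ; rw [hu τ x]
  have hst : s x = Real.tanh (x + 24 * ε * t) := by rw [hsdef]
  have hT : HasDerivAt (fun τ => 2 * A * (3 * Real.tanh (x + 24 * ε * τ) ^ 2 - 2))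
      (288 * A * ε * (s x - s x ^ 3)) t := by
    have hin : HasDerivAt (fun τ : ℝ => x + 24 * ε * τ) (24 * ε) t := by
      simpa using ((hasDerivAt_id t).const_mul (24 * ε)).const_add x
    have htan : HasDerivAt (fun τ => Real.tanh (x + 24 * ε * τ))
        ((1 - Real.tanh (x + 24 * ε * t) ^ 2) * (24 * ε)) t := by
      have := (my_hasDerivAt_tanh (x + 24 * ε * t)).comp t hin; exact this
    have h := (((htan.pow 2).const_mul 3).sub_const 2).const_mul (2 * A)
    refine h.congr_deriv ?_
    rw [hst]; push_cast; ring
  have et : deriv (fun τ => u τ x) t = 288 * A * ε * (s x - s x ^ 3) := by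
    rw [htfun]; exact hT.deriv
  rw [et, hu t x, ← hst, e1, e5]
  simp only
  linear_combination (48 * A * (s x - s x ^ 3) * (3 * s x ^ 2 - 2) ^ 2) * hA2
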